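/- Let π ∈ Λ be either a symmetric irreducible element of Λ or π = t + 2 + t⁻¹, let A = ⊕_{i∈I} Λ/(π^{n_i}) with I a nonempty finite index set and all n_i > 0, let n = max{n_i : i ∈ I}, and let φ be a non-degenerate hermitian form on A. Then there exists γ ∈ A with φ(γ,γ) = P/πⁿ mod Λ for some P ∈ Λ coprime to π. -/

import Mathlib

open LaurentPolynomial

set_option maxHeartbeats 1000000
set_option synthInstance.maxHeartbeats 400000

noncomputable section

/-- `Λ = ℚ[t,t⁻¹]`, the ring of Laurent polynomials over `ℚ`. -/
abbrev Λ : Type := LaurentPolynomial ℚ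

/-- The variable `t` of `Λ`. -/
def tΛ : Λ := T 1

/-- The involution `P(t) ↦ P(t⁻¹)` of `Λ`. -/
def lbar : Λ →+* Λ := (invert : Λ ≃ₐ[ℚ] Λ).toRingEquiv.toRingHom

/-- `P ∈ Λ` is symmetric if `P(t⁻¹) = P(t)`. -/
def SymmL (P : Λ) : Prop := lbar P = P

/-- The fraction field `ℚ(t)` of `Λ`. -/
abbrev KΛ : Type := FractionRing Λ

/-- The involution of `ℚ(t)` extending that of `Λ`. -/
def kbar : KΛ →+* KΛ :=
  (IsFractionRing.ringEquivOfRingEquiv (A := Λ) (B := Λ) (K := KΛ) (L := KΛ)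
    (invert : Λ ≃ₐ[ℚ] Λ).toRingEquiv).toRingHom

lemma kbar_algebraMap (P : Λ) : kbar (algebraMap Λ KΛ P) = algebraMap Λ KΛ (lbar P) := by
  simp [kbar, lbar]

/-- The image of `Λ` inside `ℚ(t)`, as a `Λ`-submodule of `ℚ(t)`. -/
def ΛinK : Submodule Λ KΛ := LinearMap.range (Algebra.linearMap Λ KΛ)

/-- The quotient `Λ`-module `ℚ(t)/Λ`. -/
abbrev QL : Type := KΛ ⧸ ΛinK

/-- The class in `ℚ(t)/Λ` of an element of `ℚ(t)`. -/
abbrev QLmk : KΛ →ₗ[Λ] QL := ΛinK.mkQ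

/-- The class of the fraction `P/Q` in `ℚ(t)/Λ`, for `P Q : Λ`. -/
def fracQ (P Q : Λ) : QL := QLmk (algebraMap Λ KΛ P / algebraMap Λ KΛ Q)

/-- The involution of `ℚ(t)/Λ` induced by `P(t) ↦ P(t⁻¹)`. -/
def qbar : QL → QL := fun x =>
  Quotient.liftOn x (fun a => QLmk (kbar a)) (by
    intro a b h
    obtain ⟨r, hr⟩ := (Submodule.quotientRel_def (p := ΛinK)).mp h
    apply (Submodule.Quotient.eq _).2
    refine ⟨lbar r, ?_⟩
    rw [← map_sub, ← hr]
    exact (kbar_algebraMap _).symm)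

lemma qbar_mk (a : KΛ) : qbar (QLmk a) = QLmk (kbar a) := rfl

/-- Evaluation of a Laurent polynomial at a nonzero rational number. -/
def evalL (q : ℚˣ) : Λ →ₐ[ℚ] ℚ :=
  AddMonoidAlgebra.lift ℚ ℚ ℤ ((Units.coeHom ℚ).comp (zpowersHom ℚˣ q))

/-- A hermitian form on a `Λ`-module `A`, with values in `ℚ(t)/Λ`:
it is `Λ`-linear in the first variable and conjugate-symmetric (hence
semilinear with respect to the involution in the second variable). -/
structure HermForm (A : Type*) [AddCommGroup A] [Module Λ A] where
  bil : A → A → QL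
  add_left : ∀ x y z : A, bil (x + y) z = bil x z + bil y z
  smul_left : ∀ (r : Λ) (x y : A), bil (r • x) y = r • bil x y
  conj_symm : ∀ x y : A, bil x y = qbar (bil y x)

/-- A hermitian form is non-degenerate if `φ(x,y) = 0` for all `y` implies `x = 0`. -/
def HermForm.Nondeg {A : Type*} [AddCommGroup A] [Module Λ A] (φ : HermForm A) : Prop :=
  ∀ x : A, (∀ y : A, φ.bil x y = 0) → x = 0

/-- Two hermitian forms are isometric if they differ by a `Λ`-module automorphism. -/
def HermForm.Isometric {A : Type*} [AddCommGroup A] [Module Λ A]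
    (φ₁ φ₂ : HermForm A) : Prop :=
  ∃ f : A ≃ₗ[Λ] A, ∀ x y : A, φ₂.bil x y = φ₁.bil (f x) (f y)

/-! ### Auxiliary lemmas -/

instance : IsDomain Λ := NoZeroDivisors.to_isDomain _

instance : IsPrincipalIdealRing Λ := by
  constructor
  intro I
  have hloc := LaurentPolynomial.isLocalization (R := ℚ)
  have h := IsLocalization.map_comap (Submonoid.powers (Polynomial.X : Polynomial ℚ)) Λ I
  obtain ⟨g, hg⟩ :=
    (IsPrincipalIdealRing.principal (I.comap (algebraMap (Polynomial ℚ) Λ))).principal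
  refine ⟨⟨algebraMap (Polynomial ℚ) Λ g, ?_⟩⟩
  rw [← h, show Ideal.under (Polynomial ℚ) I = I.comap (algebraMap (Polynomial ℚ) Λ) from rfl, hg]
  simp [Ideal.map_span, Ideal.submodule_span_eq]

lemma evalL_T (q : ℚˣ) (n : ℤ) : evalL q (T n) = (q : ℚ)^n := by
  rw [evalL, T, AddMonoidAlgebra.lift_single]
  simp [zpowersHom]

lemma evalL_toLaurent (q : ℚˣ) (f : Polynomial ℚ) :
    evalL q (f.toLaurent) = f.eval (q : ℚ) := by
  have h : (evalL q).comp Polynomial.toLaurentAlg = Polynomial.aeval (q : ℚ) := by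
    apply Polynomial.algHom_ext
    simp [Polynomial.toLaurentAlg, evalL_T]
  have h2 := congrArg (fun g => g f) h
  simpa using h2

/-- the prime `t+1` of `Λ` -/
def pL : Λ := T 1 + 1

/-- `-1` as a unit of `ℚ` -/
def mou : ℚˣ := -1

lemma evalL_pL : evalL mou pL = 0 := by
  simp [pL, evalL_T, mou]

lemma pL_dvd_iff (f : Λ) : pL ∣ f ↔ evalL mou f = 0 := by
  constructor
  · rintro ⟨g, rfl⟩
    simp [evalL_pL]
  · intro h
    obtain ⟨n, f', hf'⟩ := LaurentPolynomial.exists_T_pow f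
    have hev : f'.eval (mou : ℚ) = 0 := by
      rw [← evalL_toLaurent, hf', map_mul, h, zero_mul]
    have hdvd : (Polynomial.X - Polynomial.C ((mou : ℚ))) ∣ f' :=
      (Polynomial.dvd_iff_isRoot).mpr hev
    obtain ⟨g, hg⟩ := hdvd
    refine ⟨g.toLaurent * T (-n), ?_⟩
    have h2 : f = f'.toLaurent * T (-n) := by
      rw [hf', mul_T_assoc]
      simp
    rw [h2, hg]
    have h3 : Polynomial.X - Polynomial.C ((mou : ℚ)) = Polynomial.X + 1 := by
      simp [mou]
    rw [h3, map_mul]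
    have h4 : (Polynomial.X + 1 : Polynomial ℚ).toLaurent = pL := by
      simp [pL]
    rw [h4, mul_assoc]

lemma pL_ne_zero : pL ≠ 0 := by
  intro h
  have := congrArg (evalL 1) h
  simp [pL, evalL_T] at this

lemma pL_not_unit : ¬ IsUnit pL := by
  intro h
  have := h.map (evalL mou)
  rw [evalL_pL] at this
  exact this.ne_zero rfl

lemma pL_prime : Prime pL := by
  refine ⟨pL_ne_zero, pL_not_unit, ?_⟩
  intro a b hab
  rw [pL_dvd_iff] at hab ⊢
  rw [pL_dvd_iff]
  rw [map_mul] at hab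
  rcases mul_eq_zero.mp hab with h | h
  · exact Or.inl h
  · exact Or.inr h

lemma lbar_T (n : ℤ) : lbar (T n) = T (-n) := by simp [lbar]

lemma lbar_lbar (f : Λ) : lbar (lbar f) = f := by
  simp only [lbar, RingEquiv.toRingHom_eq_coe, AlgEquiv.toRingEquiv_toRingHom, RingHom.coe_coe]
  exact LaurentPolynomial.involutive_invert f

lemma pi2_eq : tΛ + 2 + T (-1) = T (-1) * pL ^ 2 := by
  have h1 : (T (-1) : Λ) * T 1 = 1 := by rw [← T_add]; norm_num
  have h2 : (T (-1) : Λ) * pL ^ 2 = T (-1) * (T 1 * T 1) + 2 * (T (-1) * T 1) + T (-1) := by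
    rw [pL]; ring
  rw [h2, ← mul_assoc, h1, one_mul, tΛ]
  ring

lemma lbar_pL : lbar pL = T (-1) * pL := by
  have h1 : (T (-1) : Λ) * T 1 = 1 := by rw [← T_add]; norm_num
  simp [pL, lbar_T, mul_add, h1]
  ring

lemma lbar_pi2 : lbar (tΛ + 2 + T (-1)) = tΛ + 2 + T (-1) := by
  simp [tΛ, map_add, lbar_T, map_ofNat]
  ring

lemma pL_dvd_lbar {a : Λ} (h : pL ∣ a) : pL ∣ lbar a := by
  obtain ⟨c, rfl⟩ := h
  rw [map_mul, lbar_pL]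
  exact ⟨T (-1) * lbar c, by ring⟩

/-! ### The `ℚ(t)/Λ` layer -/

lemma two_eq_C : (2 : Λ) = LaurentPolynomial.C 2 := by
  have h : (2 : Λ) = 1 + 1 := by norm_num
  have h' : (2 : ℚ) = 1 + 1 := by norm_num
  rw [h, h', map_add, map_one]

lemma lbar_two : lbar (2 : Λ) = 2 := by
  have h : (2 : Λ) = 1 + 1 := by norm_num
  rw [h, map_add, map_one]

lemma algΛK_injective : Function.Injective (algebraMap Λ KΛ) :=
  IsFractionRing.injective Λ KΛ

lemma algΛK_ne_zero {Q : Λ} (hQ : Q ≠ 0) : algebraMap Λ KΛ Q ≠ 0 := by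
  intro h
  exact hQ (algΛK_injective (by simpa using h))

lemma smul_KΛ (r : Λ) (x : KΛ) : r • x = algebraMap Λ KΛ r * x := by
  rw [← algebraMap_smul KΛ r x, smul_eq_mul]

lemma QLmk_eq_zero_iff (x : KΛ) : QLmk x = 0 ↔ ∃ R : Λ, algebraMap Λ KΛ R = x := by
  rw [Submodule.mkQ_apply, Submodule.Quotient.mk_eq_zero]
  constructor
  · rintro ⟨R, hR⟩; exact ⟨R, hR⟩
  · rintro ⟨R, hR⟩; exact ⟨R, hR⟩

lemma fracQ_eq_zero_iff {Q : Λ} (hQ : Q ≠ 0) (P : Λ) : fracQ P Q = 0 ↔ Q ∣ P := by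
  rw [fracQ, QLmk_eq_zero_iff]
  constructor
  · rintro ⟨R, hR⟩
    rw [eq_div_iff (algΛK_ne_zero hQ), ← map_mul] at hR
    exact ⟨R, by rw [mul_comm] at hR; exact (algΛK_injective hR).symm⟩
  · rintro ⟨R, rfl⟩
    refine ⟨R, ?_⟩
    rw [map_mul, mul_comm, mul_div_assoc, div_self (algΛK_ne_zero hQ), mul_one]

lemma fracQ_add (P P' Q : Λ) : fracQ P Q + fracQ P' Q = fracQ (P + P') Q := by
  rw [fracQ, fracQ, fracQ, ← map_add, ← add_div, ← map_add]

lemma smul_fracQ (r P Q : Λ) : r • fracQ P Q = fracQ (r * P) Q := by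
  rw [fracQ, fracQ, ← map_smul]
  congr 1
  rw [smul_KΛ, map_mul, mul_div_assoc]

lemma qbar_fracQ (P Q : Λ) : qbar (fracQ P Q) = fracQ (lbar P) (lbar Q) := by
  rw [fracQ, fracQ, qbar_mk, map_div₀, kbar_algebraMap, kbar_algebraMap]

lemma kbar_kbar (x : KΛ) : kbar (kbar x) = x := by
  have h : kbar.comp kbar = RingHom.id KΛ := by
    apply IsLocalization.ringHom_ext (nonZeroDivisors Λ)
    refine RingHom.ext fun P => ?_
    simp only [RingHom.comp_apply, RingHom.id_apply, kbar_algebraMap]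
    rw [lbar_lbar]
  exact congrArg (fun f => f x) h

lemma qbar_qbar (x : QL) : qbar (qbar x) = x := by
  obtain ⟨k, rfl⟩ := Submodule.Quotient.mk_surjective _ x
  rw [show (Submodule.Quotient.mk k : QL) = QLmk k from rfl, qbar_mk, qbar_mk, kbar_kbar]

lemma qbar_add (x y : QL) : qbar (x + y) = qbar x + qbar y := by
  obtain ⟨k, rfl⟩ := Submodule.Quotient.mk_surjective _ x
  obtain ⟨l, rfl⟩ := Submodule.Quotient.mk_surjective _ y
  rw [show (Submodule.Quotient.mk k : QL) = QLmk k from rfl,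
    show (Submodule.Quotient.mk l : QL) = QLmk l from rfl, ← map_add, qbar_mk, qbar_mk, qbar_mk,
    map_add, map_add]

lemma qbar_smul (r : Λ) (x : QL) : qbar (r • x) = lbar r • qbar x := by
  obtain ⟨k, rfl⟩ := Submodule.Quotient.mk_surjective _ x
  rw [show (Submodule.Quotient.mk k : QL) = QLmk k from rfl, ← map_smul, qbar_mk, qbar_mk,
    ← map_smul]
  congr 1
  rw [smul_KΛ, map_mul, kbar_algebraMap, smul_KΛ]

lemma exists_fracQ {d : Λ} (hd : d ≠ 0) {ξ : QL} (h : d • ξ = 0) : ∃ P : Λ, ξ = fracQ P d := by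
  obtain ⟨k, rfl⟩ := Submodule.Quotient.mk_surjective _ ξ
  have hk : (QLmk (d • k) : QL) = 0 := by
    rw [map_smul] at *
    exact h
  rw [QLmk_eq_zero_iff] at hk
  obtain ⟨P, hP⟩ := hk
  refine ⟨P, ?_⟩
  rw [show (Submodule.Quotient.mk k : QL) = QLmk k from rfl, fracQ]
  congr 1
  rw [eq_div_iff (algΛK_ne_zero hd), hP, smul_KΛ, mul_comm]

lemma HermForm.bil_zero_left {A : Type*} [AddCommGroup A] [Module Λ A] (φ : HermForm A)
    (y : A) : φ.bil 0 y = 0 := by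
  have h := φ.add_left 0 0 y
  rw [add_zero] at h
  have h2 : φ.bil 0 y + 0 = φ.bil 0 y + φ.bil 0 y := by rw [add_zero]; exact h
  exact (add_left_cancel h2).symm

/-- existence of an element of maximal order with
`φ(γ,γ) = P/πⁿ`, `P` coprime to `π`. -/
theorem stmt_17 (π : Λ) (hπ : (Irreducible π ∧ SymmL π) ∨ π = tΛ + 2 + T (-1))
    (I : Type) [Fintype I] [Nonempty I] (n : I → ℕ) (hn : ∀ i, 0 < n i)
    (N : ℕ) (hNub : ∀ i, n i ≤ N) (hNmem : ∃ i, n i = N)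
    (φ : HermForm (∀ i : I, Λ ⧸ (Ideal.span {π ^ n i} : Ideal Λ)))
    (hnd : φ.Nondeg) :
    ∃ (γ : ∀ i : I, Λ ⧸ (Ideal.span {π ^ n i} : Ideal Λ)) (P : Λ),
      IsCoprime P π ∧ φ.bil γ γ = fracQ P (π ^ N) := by
  classical
  obtain ⟨p, u, eE, hp, hu, heE, hfac, hpbar⟩ :
      ∃ (p u : Λ) (eE : ℕ), Prime p ∧ IsUnit u ∧ 0 < eE ∧ π = u * p ^ eE ∧ p ∣ lbar p := by
    rcases hπ with ⟨hirr, hsym⟩ | hpi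
    · refine ⟨π, 1, 1, ?_, isUnit_one, one_pos, by ring, ?_⟩
      · rw [← Ideal.span_singleton_prime hirr.ne_zero]
        exact (PrincipalIdealRing.isMaximal_of_irreducible hirr).isPrime
      · rw [hsym]
    · exact ⟨pL, T (-1), 2, pL_prime, LaurentPolynomial.isUnit_T _, two_pos,
        by rw [hpi, pi2_eq], ⟨T (-1), by rw [lbar_pL]; ring⟩⟩
  have hπbar : lbar π = π := by
    rcases hπ with ⟨_, hsym⟩ | hpi
    · exact hsym
    · rw [hpi]; exact lbar_pi2
  have hp0 : p ≠ 0 := hp.ne_zero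
  have hπ0 : π ≠ 0 := by
    rw [hfac]
    exact mul_ne_zero hu.ne_zero (pow_ne_zero _ hp0)
  set D : Λ := π ^ N with hD
  have hD0 : D ≠ 0 := pow_ne_zero _ hπ0
  have hDbar : lbar D = D := by rw [hD, map_pow, hπbar]
  set K : ℕ := eE * N with hKdef
  obtain ⟨i₀, hi₀⟩ := hNmem
  have hN0 : 0 < N := hi₀ ▸ hn i₀
  have hK0 : 0 < K := Nat.mul_pos heE hN0
  have hDassoc : Associated (p ^ K) D := by
    refine ⟨hu.unit ^ N, ?_⟩
    rw [Units.val_pow_eq_pow_val, IsUnit.unit_spec, hD, hfac, mul_pow, ← pow_mul, hKdef,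
      mul_comm]
  -- torsion
  have htors : ∀ v : (∀ i : I, Λ ⧸ (Ideal.span {π ^ n i} : Ideal Λ)), D • v = 0 := by
    intro v
    funext i
    have h1 : D • v i = 0 := by
      obtain ⟨z, hz⟩ := Submodule.Quotient.mk_surjective _ (v i)
      rw [← hz, ← Submodule.Quotient.mk_smul, smul_eq_mul, Submodule.Quotient.mk_eq_zero]
      exact Ideal.mem_span_singleton.mpr ((pow_dvd_pow π (hNub i)).mul_right z)
    simpa using h1
  have hbil_tors : ∀ v w, ∃ P : Λ, φ.bil v w = fracQ P D := by
    intro v w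
    apply exists_fracQ hD0
    rw [← φ.smul_left, htors v, φ.bil_zero_left]
  -- the basis element of maximal order
  set e0 : ∀ i : I, Λ ⧸ (Ideal.span {π ^ n i} : Ideal Λ) := Pi.single i₀ 1 with he0
  have hzero_ne : (p ^ (K - 1)) • e0 ≠ 0 := by
    intro h0
    have h1 := congrFun h0 i₀
    rw [Pi.smul_apply, he0, Pi.single_eq_same, Pi.zero_apply] at h1
    have hone : (1 : Λ ⧸ (Ideal.span {π ^ n i₀} : Ideal Λ)) = Submodule.Quotient.mk 1 := by
      rw [Ideal.Quotient.mk_eq_mk, map_one]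
    rw [hone, ← Submodule.Quotient.mk_smul, smul_eq_mul, mul_one,
      Submodule.Quotient.mk_eq_zero, Ideal.mem_span_singleton, hi₀] at h1
    rw [← hD, ← hDassoc.dvd_iff_dvd_left] at h1
    have h2 : p ^ (K - 1) * p ∣ p ^ (K - 1) * 1 := by
      rw [mul_one, ← pow_succ, Nat.sub_add_cancel hK0]
      exact h1
    have h3 := (mul_dvd_mul_iff_left (a := (p ^ (K - 1) : Λ))
      (pow_ne_zero (K - 1) hp0)).mp h2
    exact hp.not_unit (isUnit_of_dvd_one h3)
  obtain ⟨y, hy⟩ : ∃ y, φ.bil ((p ^ (K - 1)) • e0) y ≠ 0 := by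
    by_contra h
    push_neg at h
    exact hzero_ne (hnd _ h)
  obtain ⟨a, ha⟩ := hbil_tors e0 y
  have hpa : ¬ p ∣ a := by
    rintro ⟨a', rfl⟩
    apply hy
    rw [φ.smul_left, ha, smul_fracQ, fracQ_eq_zero_iff hD0, ← hDassoc.dvd_iff_dvd_left]
    have h1 : p ^ (K - 1) * (p * a') = p ^ K * a' := by
      rw [← mul_assoc, ← pow_succ, Nat.sub_add_cancel hK0]
    rw [h1]
    exact Dvd.intro a' rfl
  obtain ⟨s, hs⟩ := hbil_tors e0 e0
  obtain ⟨b, hb⟩ := hbil_tors y y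
  set m : Λ := a * lbar a with hm
  have hpm : ¬ p ∣ m := by
    intro h
    rcases hp.dvd_mul.mp h with h | h
    · exact hpa h
    · apply hpa
      have h2 : lbar p ∣ lbar (lbar a) := map_dvd lbar h
      rw [lbar_lbar] at h2
      exact dvd_trans hpbar h2
  have h2unit : IsUnit (2 : Λ) := by
    refine IsUnit.of_mul_eq_one (a := (2 : Λ)) (algebraMap ℚ Λ (1/2)) ?_
    rw [two_eq_C, show (algebraMap ℚ Λ) = LaurentPolynomial.C from rfl, ← map_mul]
    norm_num
  obtain ⟨c, hcbar, hc⟩ : ∃ c : Λ, lbar c = c ∧ ¬ p ∣ (s + 2 * c * m + c ^ 2 * (m * b)) := by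
    by_contra hcon
    push_neg at hcon
    have h0 := hcon 0 (map_zero lbar)
    have h1 := hcon 1 (map_one lbar)
    have h2 := hcon 2 lbar_two
    have hX : p ∣ 2 * m + m * b := by
      have h' := dvd_sub h1 h0
      have e : (s + 2 * 1 * m + 1 ^ 2 * (m * b)) - (s + 2 * 0 * m + 0 ^ 2 * (m * b))
          = 2 * m + m * b := by ring
      rwa [e] at h'
    have hY : p ∣ 4 * m + 4 * (m * b) := by
      have h' := dvd_sub h2 h0
      have e : (s + 2 * 2 * m + 2 ^ 2 * (m * b)) - (s + 2 * 0 * m + 0 ^ 2 * (m * b))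
          = 4 * m + 4 * (m * b) := by ring
      rwa [e] at h'
    have hmb : p ∣ 2 * (m * b) := by
      have h' := dvd_sub hY (hX.mul_left 2)
      have e : (4 * m + 4 * (m * b)) - 2 * (2 * m + m * b) = 2 * (m * b) := by ring
      rwa [e] at h'
    have hmb' : p ∣ m * b := by
      rcases hp.dvd_mul.mp hmb with h | h
      · exact absurd (isUnit_of_dvd_unit h h2unit) hp.not_unit
      · exact h
    have hm2 : p ∣ 2 * m := by
      have h' := dvd_sub hX hmb'
      have e : (2 * m + m * b) - m * b = 2 * m := by ring
      rwa [e] at h'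
    rcases hp.dvd_mul.mp hm2 with h | h
    · exact absurd (isUnit_of_dvd_unit h h2unit) hp.not_unit
    · exact hpm h
  -- the element γ
  have hqself : qbar (φ.bil e0 e0) = φ.bil e0 e0 := (φ.conj_symm e0 e0).symm
  have hqyy : qbar (φ.bil y y) = φ.bil y y := (φ.conj_symm y y).symm
  set r : Λ := c * a with hr
  have expand : φ.bil (e0 + r • y) (e0 + r • y)
      = φ.bil e0 e0 + lbar r • φ.bil e0 y + r • qbar (φ.bil e0 y)
        + (r * lbar r) • φ.bil y y := by
    have crossL : φ.bil (e0 + r • y) (e0 + r • y)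
        = φ.bil e0 (e0 + r • y) + r • φ.bil y (e0 + r • y) := by
      rw [φ.add_left, φ.smul_left]
    have c1 : φ.bil e0 (e0 + r • y) = φ.bil e0 e0 + lbar r • φ.bil e0 y := by
      rw [φ.conj_symm e0 (e0 + r • y), φ.add_left, φ.smul_left, qbar_add, qbar_smul, hqself,
        φ.conj_symm y e0, qbar_qbar]
    have c2 : φ.bil y (e0 + r • y) = qbar (φ.bil e0 y) + lbar r • φ.bil y y := by
      rw [φ.conj_symm y (e0 + r • y), φ.add_left, φ.smul_left, qbar_add, qbar_smul, hqyy]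
    rw [crossL, c1, c2, smul_add, smul_smul]
    abel
  have hval : φ.bil (e0 + r • y) (e0 + r • y)
      = fracQ (s + lbar r * a + r * lbar a + (r * lbar r) * b) D := by
    rw [expand, hs, ha, hb, qbar_fracQ, hDbar, smul_fracQ, smul_fracQ, smul_fracQ,
      fracQ_add, fracQ_add, fracQ_add]
  have hnum : s + lbar r * a + r * lbar a + (r * lbar r) * b
      = s + 2 * c * m + c ^ 2 * (m * b) := by
    rw [hr, map_mul, hcbar, hm]
    ring
  refine ⟨e0 + r • y, s + 2 * c * m + c ^ 2 * (m * b), ?_, ?_⟩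
  · have hcop : IsCoprime (s + 2 * c * m + c ^ 2 * (m * b)) p :=
      ((hp.coprime_iff_not_dvd).mpr hc).symm
    have hcop2 : IsCoprime (s + 2 * c * m + c ^ 2 * (m * b)) (p ^ eE) := hcop.pow_right
    rw [hfac]
    exact (isCoprime_mul_unit_left_right hu _ _).mpr hcop2
  · rw [hval, hnum]
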